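/- arXiv:1204.3771 — 2 statements merged into one kernel-verified Lean document; each statement's English description precedes it below -/
import Mathlib

section
/- For every integer n ≥ 2 and all integers i, j with 2 ≤ i < j ≤ 2n, the cardinality of 𝔅_n(i,j) equals the cardinality of 𝔅_{n−1}(j−2). (A bijection is given by deleting the first r and the first f of a path.) -/
/-- A `B_n`-path: a word of length `2n` over the alphabet `{r, f}` (here `true` stands
for `r` and `false` for `f`) such that every prefix contains at least as many `r`'s
as `f`'s. -/
def BPaths (n : ℕ) : Finset (Fin (2*n) → Bool) :=
  Finset.univ.filter fun w =>
    ∀ m : Fin (2*n + 1),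
      (Finset.univ.filter fun i : Fin (2*n) => (i : ℕ) < (m : ℕ) ∧ w i = false).card ≤
      (Finset.univ.filter fun i : Fin (2*n) => (i : ℕ) < (m : ℕ) ∧ w i = true).card

/-- `𝔅_n(i)`: the set of `B_n`-paths whose first (leftmost) `f` occurs at the
(1-indexed) position `i`; by convention, for `i = 2n+1` this is the singleton
consisting of the all-`r` path. -/
def BPathsF (n i : ℕ) : Finset (Fin (2*n) → Bool) :=
  (BPaths n).filter fun w =>
    (∀ j : Fin (2*n), (j : ℕ) + 1 < i → w j = true) ∧
    (∀ j : Fin (2*n), (j : ℕ) + 1 = i → w j = false)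

/-- `𝔅_n(i, j)`: the set of `B_n`-paths whose first (leftmost) `f` occurs at the
(1-indexed) position `i` and whose second `f` occurs at position `j`. -/
def BPathsFF (n i j : ℕ) : Finset (Fin (2*n) → Bool) :=
  (BPaths n).filter fun w =>
    (∀ m : Fin (2*n), (m : ℕ) + 1 < i → w m = true) ∧
    (∀ m : Fin (2*n), (m : ℕ) + 1 = i → w m = false) ∧
    (∀ m : Fin (2*n), i < (m : ℕ) + 1 → (m : ℕ) + 1 < j → w m = true) ∧
    (∀ m : Fin (2*n), (m : ℕ) + 1 = j → w m = false)

def cnt (N : ℕ) (w : Fin N → Bool) (p : ℕ) (b : Bool) : ℕ :=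
  (Finset.univ.filter fun m : Fin N => (m : ℕ) < p ∧ w m = b).card

lemma cnt_zero (N : ℕ) (w : Fin N → Bool) (b : Bool) : cnt N w 0 b = 0 := by
  simp [cnt]

lemma cnt_succ (N : ℕ) (w : Fin N → Bool) (p : ℕ) (b : Bool) (h : p < N) :
    cnt N w (p+1) b = cnt N w p b + (if w ⟨p, h⟩ = b then 1 else 0) := by
  unfold cnt
  by_cases hw : w ⟨p, h⟩ = b
  · rw [if_pos hw]
    have he : (Finset.univ.filter fun m : Fin N => (m:ℕ) < p+1 ∧ w m = b)
        = insert ⟨p,h⟩ (Finset.univ.filter fun m : Fin N => (m:ℕ) < p ∧ w m = b) := by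
      ext m
      simp only [Finset.mem_insert, Finset.mem_filter, Finset.mem_univ, true_and]
      constructor
      · rintro ⟨h1, h2⟩
        rcases Nat.lt_succ_iff_lt_or_eq.mp h1 with h1 | h1
        · exact Or.inr ⟨h1, h2⟩
        · exact Or.inl (Fin.ext h1)
      · rintro (rfl | ⟨h1, h2⟩)
        · exact ⟨Nat.lt_succ_self _, hw⟩
        · exact ⟨Nat.lt_succ_of_lt h1, h2⟩
    rw [he, Finset.card_insert_of_notMem (by simp)]
  · rw [if_neg hw]
    have he : (Finset.univ.filter fun m : Fin N => (m:ℕ) < p+1 ∧ w m = b)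
        = (Finset.univ.filter fun m : Fin N => (m:ℕ) < p ∧ w m = b) := by
      ext m
      simp only [Finset.mem_filter, Finset.mem_univ, true_and]
      constructor
      · rintro ⟨h1, h2⟩
        refine ⟨?_, h2⟩
        rcases Nat.lt_succ_iff_lt_or_eq.mp h1 with h1 | h1
        · exact h1
        · exact absurd ((Fin.ext h1 : m = ⟨p,h⟩) ▸ h2) hw
      · rintro ⟨h1, h2⟩
        exact ⟨Nat.lt_succ_of_lt h1, h2⟩
    rw [he]
    omega

lemma cnt_all_true (N : ℕ) (w : Fin N → Bool) (p : ℕ)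
    (h : ∀ m : Fin N, (m:ℕ) < p → w m = true) : cnt N w p false = 0 := by
  unfold cnt
  rw [Finset.card_eq_zero]
  ext m
  simp only [Finset.mem_filter, Finset.mem_univ, true_and, Finset.notMem_empty, iff_false]
  rintro ⟨h1, h2⟩
  rw [h m h1] at h2
  exact Bool.noConfusion h2

lemma mem_BPaths_iff (n : ℕ) (w : Fin (2*n) → Bool) :
    w ∈ BPaths n ↔ ∀ p : ℕ, p ≤ 2*n → cnt (2*n) w p false ≤ cnt (2*n) w p true := by
  unfold BPaths
  rw [Finset.mem_filter]
  simp only [Finset.mem_univ, true_and]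
  constructor
  · intro h p hp
    exact h ⟨p, by omega⟩
  · intro h m
    exact h (m : ℕ) (by omega)

def Fm (n i : ℕ) (w : Fin (2*n) → Bool) : Fin (2*(n-1)) → Bool :=
  fun m => if (m:ℕ)+3 = i then true
           else if h : (m:ℕ)+2 < 2*n then w ⟨(m:ℕ)+2, h⟩ else false

def Gm (n i j : ℕ) (w' : Fin (2*(n-1)) → Bool) : Fin (2*n) → Bool :=
  fun m => if (m:ℕ)+1 = i then false
           else if (m:ℕ)+1 < j then true
           else if h : (m:ℕ)-2 < 2*(n-1) then w' ⟨(m:ℕ)-2, h⟩ else false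

lemma cnt_rel (n i j : ℕ) (hn : 2 ≤ n) (hi : 2 ≤ i) (hij : i < j) (hj : j ≤ 2*n)
    (w : Fin (2*n) → Bool) (w' : Fin (2*(n-1)) → Bool)
    (h0 : ∀ h : 0 < 2*n, w ⟨0, h⟩ = true)
    (h1t : i ≠ 2 → ∀ h : 1 < 2*n, w ⟨1, h⟩ = true)
    (h1f : i = 2 → ∀ h : 1 < 2*n, w ⟨1, h⟩ = false)
    (hRa : ∀ q : ℕ, ∀ h1 : q < 2*(n-1), ∀ h2 : q+2 < 2*n, q+3 = i →
      w' ⟨q, h1⟩ = true ∧ w ⟨q+2, h2⟩ = false)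
    (hRb : ∀ q : ℕ, ∀ h1 : q < 2*(n-1), ∀ h2 : q+2 < 2*n, q+3 ≠ i →
      w' ⟨q, h1⟩ = w ⟨q+2, h2⟩) :
    ∀ q : ℕ, q + 2 ≤ 2*n →
      (cnt (2*n) w (q+2) false = cnt (2*(n-1)) w' q false + (if i ≤ q+2 then 1 else 0) ∧
       cnt (2*n) w (q+2) true = cnt (2*(n-1)) w' q true + (2 - (if i ≤ q+2 then 1 else 0))) := by
  intro q
  induction q with
  | zero =>
    intro _
    have c1f := cnt_succ (2*n) w 0 false (by omega)
    have c2f : cnt (2*n) w 2 false = cnt (2*n) w 1 false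
        + (if w ⟨1, by omega⟩ = false then 1 else 0) := cnt_succ (2*n) w 1 false (by omega)
    have c1t := cnt_succ (2*n) w 0 true (by omega)
    have c2t : cnt (2*n) w 2 true = cnt (2*n) w 1 true
        + (if w ⟨1, by omega⟩ = true then 1 else 0) := cnt_succ (2*n) w 1 true (by omega)
    rw [cnt_zero] at c1f c1t
    rw [h0 (by omega)] at c1f c1t
    simp only [zero_add]
    rw [cnt_zero, cnt_zero]
    by_cases hi2 : i = 2
    · rw [h1f hi2 (by omega)] at c2f c2t
      rw [if_pos (by omega : i ≤ 2)]
      simp at c1f c1t c2f c2t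
      constructor <;> omega
    · rw [h1t hi2 (by omega)] at c2f c2t
      rw [if_neg (by omega : ¬ i ≤ 2)]
      simp at c1f c1t c2f c2t
      constructor <;> omega
  | succ q IH =>
    intro hq
    obtain ⟨ihf, iht⟩ := IH (by omega)
    have hmlt : q < 2*(n-1) := by omega
    have hwlt : q + 2 < 2*n := by omega
    have cf : cnt (2*n) w (q+1+2) false = cnt (2*n) w (q+2) false
        + (if w ⟨q+2, hwlt⟩ = false then 1 else 0) := cnt_succ (2*n) w (q+2) false hwlt
    have ct : cnt (2*n) w (q+1+2) true = cnt (2*n) w (q+2) true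
        + (if w ⟨q+2, hwlt⟩ = true then 1 else 0) := cnt_succ (2*n) w (q+2) true hwlt
    have cf' := cnt_succ (2*(n-1)) w' q false hmlt
    have ct' := cnt_succ (2*(n-1)) w' q true hmlt
    by_cases hcase : q + 3 = i
    · obtain ⟨e1, e2⟩ := hRa q hmlt hwlt hcase
      rw [e2] at cf ct
      rw [e1] at cf' ct'
      rw [if_neg (by omega : ¬ i ≤ q+2)] at ihf iht
      rw [if_pos (by omega : i ≤ q+1+2)]
      simp at cf ct cf' ct'
      constructor <;> omega
    · have e := hRb q hmlt hwlt hcase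
      rw [e] at cf' ct'
      have hiff : (if i ≤ q+1+2 then (1:ℕ) else 0) = (if i ≤ q+2 then (1:ℕ) else 0) := by
        by_cases h : i ≤ q+2
        · rw [if_pos h, if_pos (by omega)]
        · rw [if_neg h, if_neg (by omega)]
      rw [hiff]
      rcases hb : w ⟨q+2, hwlt⟩ with _ | _ <;> rw [hb] at cf ct cf' ct' <;>
        simp at cf ct cf' ct' <;> constructor <;> omega

/-- For `2 ≤ i < j ≤ 2n`, the cardinality of `𝔅_n(i,j)` equals that of
`𝔅_{n-1}(j-2)` (a bijection is given by deleting the first `r` and the first `f`). -/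
theorem card_BPathsFF (n i j : ℕ) (hn : 2 ≤ n) (hi : 2 ≤ i) (hij : i < j)
    (hj : j ≤ 2*n) :
    (BPathsFF n i j).card = (BPathsF (n-1) (j-2)).card := by
  classical
  have h3j : 3 ≤ j := by omega
  -- membership characterizations
  have memFF : ∀ w : Fin (2*n) → Bool, w ∈ BPathsFF n i j ↔
      (w ∈ BPaths n ∧
      (∀ m : Fin (2*n), (m : ℕ) + 1 < i → w m = true) ∧
      (∀ m : Fin (2*n), (m : ℕ) + 1 = i → w m = false) ∧
      (∀ m : Fin (2*n), i < (m : ℕ) + 1 → (m : ℕ) + 1 < j → w m = true) ∧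
      (∀ m : Fin (2*n), (m : ℕ) + 1 = j → w m = false)) := by
    intro w
    unfold BPathsFF
    rw [Finset.mem_filter]
  have memF : ∀ w' : Fin (2*(n-1)) → Bool, w' ∈ BPathsF (n-1) (j-2) ↔
      (w' ∈ BPaths (n-1) ∧
      (∀ m : Fin (2*(n-1)), (m : ℕ) + 1 < j-2 → w' m = true) ∧
      (∀ m : Fin (2*(n-1)), (m : ℕ) + 1 = j-2 → w' m = false)) := by
    intro w'
    unfold BPathsF
    rw [Finset.mem_filter]
  apply Finset.card_bij' (fun w _ => Fm n i w) (fun w' _ => Gm n i j w')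
  · -- Fm maps into BPathsF (n-1) (j-2)
    intro w hw
    rw [memFF] at hw
    obtain ⟨hwB, hA, hB, hC, hD⟩ := hw
    -- the pointwise relations
    have hRa : ∀ q : ℕ, ∀ h1 : q < 2*(n-1), ∀ h2 : q+2 < 2*n, q+3 = i →
        Fm n i w ⟨q, h1⟩ = true ∧ w ⟨q+2, h2⟩ = false := by
      intro q h1 h2 hc
      exact ⟨by simp [Fm, hc], hB ⟨q+2, h2⟩ (show q+2+1 = i by omega)⟩
    have hRb : ∀ q : ℕ, ∀ h1 : q < 2*(n-1), ∀ h2 : q+2 < 2*n, q+3 ≠ i →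
        Fm n i w ⟨q, h1⟩ = w ⟨q+2, h2⟩ := by
      intro q h1 h2 hc
      simp [Fm, hc, h2]
    have key := cnt_rel n i j hn hi hij hj w (Fm n i w)
      (fun h => hA ⟨0, h⟩ (show 0+1 < i by omega))
      (fun h2i h => hA ⟨1, h⟩ (show 1+1 < i by omega))
      (fun h2i h => hB ⟨1, h⟩ (show 1+1 = i by omega))
      hRa hRb
    rw [memF]
    refine ⟨?_, ?_, ?_⟩
    · rw [mem_BPaths_iff]
      intro p hp
      have hkey := key p (by omega)
      rw [mem_BPaths_iff] at hwB
      have hw2 := hwB (p+2) (by omega)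
      by_cases hip : i ≤ p + 2
      · rw [if_pos hip] at hkey
        omega
      · have hz : cnt (2*(n-1)) (Fm n i w) p false = 0 := by
          apply cnt_all_true
          intro m hm
          by_cases hc : (m:ℕ)+3 = i
          · simp [Fm, hc]
          · have := hRb (m:ℕ) m.isLt (by omega) hc
            have hT : w ⟨(m:ℕ)+2, by omega⟩ = true := hA _ (show (m:ℕ)+2+1 < i by omega)
            rw [show (⟨(m:ℕ), m.isLt⟩ : Fin (2*(n-1))) = m from Fin.ext rfl] at this
            rw [this, hT]
        rw [hz]
        exact Nat.zero_le _
    · intro m hm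
      by_cases hc : (m:ℕ)+3 = i
      · simp [Fm, hc]
      · have := hRb (m:ℕ) m.isLt (by omega) hc
        rw [show (⟨(m:ℕ), m.isLt⟩ : Fin (2*(n-1))) = m from Fin.ext rfl] at this
        rw [this]
        rcases Nat.lt_or_ge ((m:ℕ)+3) i with hlt | hge
        · exact hA _ (show (m:ℕ)+2+1 < i by omega)
        · exact hC _ (show i < (m:ℕ)+2+1 by omega) (show (m:ℕ)+2+1 < j by omega)
    · intro m hm
      have hc : (m:ℕ)+3 ≠ i := by omega
      have := hRb (m:ℕ) m.isLt (by omega) hc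
      rw [show (⟨(m:ℕ), m.isLt⟩ : Fin (2*(n-1))) = m from Fin.ext rfl] at this
      rw [this]
      exact hD _ (show (m:ℕ)+2+1 = j by omega)
  · -- Gm maps into BPathsFF n i j
    intro w' hw'
    rw [memF] at hw'
    obtain ⟨hw'B, hA', hB'⟩ := hw'
    set w := Gm n i j w' with hwdef
    have hA : ∀ m : Fin (2*n), (m : ℕ) + 1 < i → w m = true := by
      intro m hm
      simp [hwdef, Gm, show (m:ℕ)+1 ≠ i by omega, show (m:ℕ)+1 < j by omega]
    have hB : ∀ m : Fin (2*n), (m : ℕ) + 1 = i → w m = false := by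
      intro m hm
      simp [hwdef, Gm, hm]
    have hC : ∀ m : Fin (2*n), i < (m : ℕ)+1 → (m : ℕ)+1 < j → w m = true := by
      intro m hm1 hm2
      simp [hwdef, Gm, show (m:ℕ)+1 ≠ i by omega, hm2]
    have hD : ∀ m : Fin (2*n), (m : ℕ) + 1 = j → w m = false := by
      intro m hm
      have h1 : (m:ℕ)-2 < 2*(n-1) := by omega
      have : w m = w' ⟨(m:ℕ)-2, h1⟩ := by
        simp [hwdef, Gm, show (m:ℕ)+1 ≠ i by omega, show ¬ ((m:ℕ)+1 < j) by omega, h1]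
      rw [this]
      exact hB' _ (show (m:ℕ)-2+1 = j-2 by omega)
    have hRa : ∀ q : ℕ, ∀ h1 : q < 2*(n-1), ∀ h2 : q+2 < 2*n, q+3 = i →
        w' ⟨q, h1⟩ = true ∧ w ⟨q+2, h2⟩ = false := by
      intro q h1 h2 hc
      exact ⟨hA' _ (show q+1 < j-2 by omega), hB _ (show q+2+1 = i by omega)⟩
    have hRb : ∀ q : ℕ, ∀ h1 : q < 2*(n-1), ∀ h2 : q+2 < 2*n, q+3 ≠ i →
        w' ⟨q, h1⟩ = w ⟨q+2, h2⟩ := by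
      intro q h1 h2 hc
      rcases Nat.lt_or_ge (q+3) j with hlt | hge
      · rw [hA' _ (show q+1 < j-2 by omega)]
        symm
        rcases Nat.lt_or_ge (q+3) i with hlt2 | hge2
        · exact hA _ (show q+2+1 < i by omega)
        · exact hC _ (show i < q+2+1 by omega) (show q+2+1 < j by omega)
      · simp [hwdef, Gm, show q+2+1 ≠ i by omega, show ¬ (q+2+1 < j) by omega, h1]
    have key := cnt_rel n i j hn hi hij hj w w'
      (fun h => hA ⟨0, h⟩ (show 0+1 < i by omega))
      (fun h2i h => hA ⟨1, h⟩ (show 1+1 < i by omega))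
      (fun h2i h => hB ⟨1, h⟩ (show 1+1 = i by omega))
      hRa hRb
    rw [memFF]
    refine ⟨?_, hA, hB, hC, hD⟩
    rw [mem_BPaths_iff]
    intro p hp
    rcases Nat.lt_or_ge p 2 with hp2 | hp2
    · have hz : cnt (2*n) w p false = 0 := by
        apply cnt_all_true
        intro m hm
        exact hA m (by omega)
      rw [hz]
      exact Nat.zero_le _
    · obtain ⟨q, rfl⟩ : ∃ q, p = q + 2 := ⟨p - 2, by omega⟩
      have hkey := key q (by omega)
      rw [mem_BPaths_iff] at hw'B
      have hw2 := hw'B q (by omega)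
      by_cases hip : i ≤ q + 2 <;> [rw [if_pos hip] at hkey; rw [if_neg hip] at hkey] <;> omega
  · -- Gm ∘ Fm = id
    intro w hw
    rw [memFF] at hw
    obtain ⟨hwB, hA, hB, hC, hD⟩ := hw
    funext m
    rcases Nat.lt_or_ge ((m:ℕ)+1) j with hmj | hmj
    · rcases Nat.lt_trichotomy ((m:ℕ)+1) i with hmi | hmi | hmi
      · rw [hA m hmi]
        simp [Gm, show (m:ℕ)+1 ≠ i by omega, show (m:ℕ)+1 < j by omega]
      · rw [hB m hmi]
        simp [Gm, hmi]
      · rw [hC m hmi hmj]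
        simp [Gm, show (m:ℕ)+1 ≠ i by omega, hmj]
    · have h1 : (m:ℕ)-2 < 2*(n-1) := by omega
      have e : Gm n i j (Fm n i w) m = Fm n i w ⟨(m:ℕ)-2, h1⟩ := by
        simp [Gm, show (m:ℕ)+1 ≠ i by omega, show ¬ ((m:ℕ)+1 < j) by omega, h1]
      have e2 : Fm n i w ⟨(m:ℕ)-2, h1⟩ = w m := by
        simp [Fm, show (m:ℕ)-2+3 ≠ i by omega, show (m:ℕ)-2+2 = (m:ℕ) by omega,
          m.isLt, Fin.eta]
      rw [e, e2]
  · -- Fm ∘ Gm = id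
    intro w' hw'
    rw [memF] at hw'
    obtain ⟨hw'B, hA', hB'⟩ := hw'
    funext m
    by_cases hc : (m:ℕ)+3 = i
    · rw [hA' m (by omega)]
      simp [Fm, hc]
    · have e : Fm n i (Gm n i j w') m = Gm n i j w' ⟨(m:ℕ)+2, by omega⟩ := by
        simp [Fm, hc, show (m:ℕ)+2 < 2*n by omega]
      rw [e]
      rcases Nat.lt_or_ge ((m:ℕ)+3) j with hlt | hge
      · rw [hA' m (by omega)]
        simp [Gm, show (m:ℕ)+2+1 ≠ i by omega, show (m:ℕ)+2+1 < j by omega]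
      · have e2 : Gm n i j w' ⟨(m:ℕ)+2, by omega⟩ = w' m := by
          simp [Gm, show (m:ℕ)+2+1 ≠ i by omega, show ¬ ((m:ℕ)+2+1 < j) by omega,
            show (m:ℕ)+2-2 = (m:ℕ) by omega, m.isLt, Fin.eta]
        exact e2
end

section
/- For every integer n ≥ 2, n(n+1) · ∑_{k=1}^{n−2} 2^k · ∑_{b=1}^{n−2} (b²−3)·( C(2n−b−k−4, n−k−2) − C(2n−b−k−4, n−2) ) = 4·(3n³ + 7n² − 7n + 1)·C(2n−3, n−2) − n(n+1)(n²−1)·2^{n−1} − 2n(n+1)(3n−1)·C(2n−2, n−1). -/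
/-- The binomial coefficient `C(m, r)` for integer arguments, with the convention
that `C(m, r) = 0` when `r < 0` or `r > m`. -/
def intChoose (m r : ℤ) : ℤ :=
  if 0 ≤ r ∧ r ≤ m then ((m.toNat).choose r.toNat : ℤ) else 0

lemma ic_zero {m r : ℤ} (h : ¬ (0 ≤ r ∧ r ≤ m)) : intChoose m r = 0 := if_neg h

lemma ic_pos {m r : ℤ} (h0 : 0 ≤ r) (h1 : r ≤ m) :
    intChoose m r = ((m.toNat).choose r.toNat : ℤ) := if_pos ⟨h0, h1⟩

lemma ic_self {m : ℤ} (h : 0 ≤ m) : intChoose m m = 1 := by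
  rw [ic_pos h le_rfl]; simp

lemma ic_zero_right {m : ℤ} (h : 0 ≤ m) : intChoose m 0 = 1 := by
  rw [ic_pos le_rfl h]; simp

lemma ic_pascal {m : ℤ} (hm : 0 ≤ m) (r : ℤ) :
    intChoose (m+1) r = intChoose m r + intChoose m (r-1) := by
  rcases lt_trichotomy r 0 with h | h | h
  · rw [ic_zero (by omega), ic_zero (by omega), ic_zero (by omega)]; ring
  · subst h
    rw [ic_zero_right (by omega), ic_zero_right hm, ic_zero (by omega)]; ring
  · rcases le_or_gt r m with h2 | h2
    · rw [ic_pos (by omega) (by omega), ic_pos (by omega) h2, ic_pos (by omega) (by omega)]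
      have e1 : (m+1).toNat = m.toNat + 1 := by omega
      have e2 : r.toNat = (r-1).toNat + 1 := by omega
      rw [e1, e2, Nat.choose_succ_succ]
      push_cast; ring
    · rcases eq_or_lt_of_le (by omega : m + 1 ≤ r) with he | hlt
      · rw [← he, ic_self (by omega), ic_zero (by omega), show m+1-1 = m from by ring,
          ic_self hm]; ring
      · rw [ic_zero (by omega), ic_zero (by omega), ic_zero (by omega)]; ring

lemma ic_symm {m : ℤ} (hm : 0 ≤ m) (r : ℤ) : intChoose m r = intChoose m (m - r) := by
  by_cases h : 0 ≤ r ∧ r ≤ m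
  · rw [ic_pos h.1 h.2, ic_pos (by omega) (by omega)]
    have e : (m - r).toNat = m.toNat - r.toNat := by omega
    rw [e, Nat.choose_symm (by omega)]
  · rw [ic_zero h, ic_zero (by omega)]

lemma ic_ratio (m r : ℤ) : intChoose m (r+1) * (r+1) = intChoose m r * (m - r) := by
  by_cases h1 : 0 ≤ r ∧ r ≤ m
  · obtain ⟨hr, hrm⟩ := h1
    rcases eq_or_lt_of_le hrm with he | hlt
    · rw [ic_zero (by omega)]
      have : m - r = 0 := by omega
      rw [this]; ring
    · rw [ic_pos (by omega) (by omega), ic_pos hr hrm]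
      have e : (r+1).toNat = r.toNat + 1 := by omega
      rw [e]
      have key := Nat.choose_succ_right_eq m.toNat r.toNat
      have e2 : (m - r : ℤ) = ((m.toNat - r.toNat : ℕ) : ℤ) := by omega
      have e3 : (r + 1 : ℤ) = ((r.toNat + 1 : ℕ) : ℤ) := by omega
      rw [e2, e3]
      exact_mod_cast congrArg (Nat.cast : ℕ → ℤ) key
  · rcases not_and_or.mp h1 with h | h
    · -- r < 0
      rcases eq_or_lt_of_le (by omega : r + 1 ≤ 0) with he | hlt
      · rw [ic_zero h1, he]; ring
      · rw [ic_zero (by omega), ic_zero (by omega)]; ring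
    · -- m < r
      rw [ic_zero (by omega), ic_zero (by omega)]; ring

lemma ic_weight (b : ℕ) : 2 * intChoose b 2 + intChoose b 1 - 3 * intChoose b 0 = (b:ℤ)^2 - 3 := by
  have h0 : intChoose b 0 = 1 := ic_zero_right (Int.natCast_nonneg b)
  have h1 := ic_ratio (b:ℤ) 0
  have h2 := ic_ratio (b:ℤ) 1
  norm_num at h1 h2
  linear_combination h2 + (b:ℤ)*h1 + ((b:ℤ)^2-3)*h0

lemma vand (r : ℤ) (hr : 0 ≤ r) (B : ℕ) :
    ∀ j m : ℤ, 0 ≤ j → m ≤ (B:ℤ) + r →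
      ∑ b ∈ Finset.range (B+1), intChoose (b:ℤ) j * intChoose (m - (b:ℤ)) r
        = intChoose (m+1) (j + r + 1) := by
  induction B with
  | zero =>
    intro j m hj hm
    have hm' : m ≤ r := by omega
    simp only [zero_add, Finset.sum_range_one, Nat.cast_zero, sub_zero]
    rcases eq_or_lt_of_le hj with h0 | h0
    · subst h0
      rw [ic_zero_right le_rfl, one_mul, show (0:ℤ)+r+1 = r+1 from by ring]
      rcases eq_or_lt_of_le hm' with he | hlt
      · rw [he, ic_self hr, ic_self (by omega)]
      · rw [ic_zero (by omega), ic_zero (by omega)]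
    · have hz1 : intChoose (0:ℤ) j = 0 := ic_zero (by omega)
      have hz2 : intChoose (m+1) (j+r+1) = 0 := ic_zero (by omega)
      rw [hz1, hz2]; ring
  | succ B ih =>
    intro j m hj hm
    push_cast at hm
    rcases eq_or_lt_of_le hm with heq | hlt
    · -- m = B + 1 + r : the hard case
      rw [Finset.sum_range_succ']
      have hstep : ∀ b ∈ Finset.range (B+1),
          intChoose ((b+1 : ℕ):ℤ) j * intChoose (m - ((b+1:ℕ):ℤ)) r
            = intChoose (b:ℤ) j * intChoose ((m-1) - (b:ℤ)) r
              + intChoose (b:ℤ) (j-1) * intChoose ((m-1) - (b:ℤ)) r := by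
        intro b _
        have hp := ic_pascal (Int.natCast_nonneg b) j
        rw [show ((b+1:ℕ):ℤ) = (b:ℤ)+1 from by push_cast; ring,
          show m - ((b:ℤ)+1) = (m-1) - (b:ℤ) from by ring, hp]
        ring
      rw [Finset.sum_congr rfl hstep, Finset.sum_add_distrib]
      have hih1 : ∑ b ∈ Finset.range (B+1), intChoose (b:ℤ) j * intChoose ((m-1) - (b:ℤ)) r
          = intChoose m (j + r + 1) := by
        have h := ih j (m-1) hj (by omega)
        rwa [show m-1+1 = m from by ring] at h
      rw [hih1]
      rcases eq_or_lt_of_le hj with h0 | h0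
      · subst h0
        have hz : ∑ b ∈ Finset.range (B+1),
            intChoose (b:ℤ) ((0:ℤ)-1) * intChoose ((m-1) - (b:ℤ)) r = 0 :=
          Finset.sum_eq_zero (fun b _ => by
            have hzz : intChoose (b:ℤ) ((0:ℤ)-1) = 0 := ic_zero (by omega)
            rw [hzz]; ring)
        rw [hz]
        simp only [Nat.cast_zero, sub_zero]
        rw [ic_zero_right le_rfl, one_mul]
        have hp := ic_pascal (show (0:ℤ) ≤ m by omega) ((0:ℤ)+r+1)
        rw [show (0:ℤ)+r+1-1 = r from by ring] at hp
        linear_combination -hp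
      · have hih2 : ∑ b ∈ Finset.range (B+1),
            intChoose (b:ℤ) (j-1) * intChoose ((m-1) - (b:ℤ)) r
            = intChoose m ((j-1) + r + 1) := by
          have h := ih (j-1) (m-1) (by omega) (by omega)
          rwa [show m-1+1 = m from by ring] at h
        rw [hih2]
        simp only [Nat.cast_zero, sub_zero]
        have hz : intChoose (0:ℤ) j = 0 := ic_zero (by omega)
        rw [hz]
        have hp := ic_pascal (show (0:ℤ) ≤ m by omega) (j+r+1)
        rw [show j+r+1-1 = j-1+r+1 from by ring] at hp
        linear_combination -hp
    · rw [Finset.sum_range_succ, ih j m hj (by omega)]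
      have hz : intChoose (m - ((B+1 : ℕ):ℤ)) r = 0 := ic_zero (by push_cast; omega)
      rw [hz]
      ring

lemma ic_inner_sum (B : ℕ) (m r : ℤ) (hr : 0 ≤ r) (hm : m ≤ (B:ℤ) + r) :
    ∑ b ∈ Finset.Icc 1 B, ((b:ℤ)^2 - 3) * intChoose (m - (b:ℤ)) r
      = 2 * intChoose (m+1) (r+3) + intChoose (m+1) (r+2) - 3 * intChoose (m+1) (r+1)
        + 3 * intChoose m r := by
  have hins : Finset.range (B+1) = insert 0 (Finset.Icc 1 B) := by
    ext x; simp only [Finset.mem_range, Finset.mem_insert, Finset.mem_Icc]; omega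
  have hfull : ∑ b ∈ Finset.range (B+1), ((b:ℤ)^2 - 3) * intChoose (m - (b:ℤ)) r
      = 2 * intChoose (m+1) (r+3) + intChoose (m+1) (r+2) - 3 * intChoose (m+1) (r+1) := by
    calc ∑ b ∈ Finset.range (B+1), ((b:ℤ)^2 - 3) * intChoose (m - (b:ℤ)) r
        = ∑ b ∈ Finset.range (B+1),
            (2*(intChoose (b:ℤ) 2 * intChoose (m - (b:ℤ)) r)
              + intChoose (b:ℤ) 1 * intChoose (m - (b:ℤ)) r
              - 3*(intChoose (b:ℤ) 0 * intChoose (m - (b:ℤ)) r)) :=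
          Finset.sum_congr rfl (fun b _ => by
            linear_combination (- intChoose (m - (b:ℤ)) r) * (ic_weight b))
      _ = 2 * (∑ b ∈ Finset.range (B+1), intChoose (b:ℤ) 2 * intChoose (m - (b:ℤ)) r)
            + (∑ b ∈ Finset.range (B+1), intChoose (b:ℤ) 1 * intChoose (m - (b:ℤ)) r)
            - 3 * (∑ b ∈ Finset.range (B+1), intChoose (b:ℤ) 0 * intChoose (m - (b:ℤ)) r) := by
          rw [Finset.sum_sub_distrib, Finset.sum_add_distrib, ← Finset.mul_sum, ← Finset.mul_sum]
      _ = 2 * intChoose (m+1) (r+3) + intChoose (m+1) (r+2) - 3 * intChoose (m+1) (r+1) := by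
          rw [vand r hr B 2 m (by norm_num) hm, vand r hr B 1 m (by norm_num) hm,
            vand r hr B 0 m le_rfl hm,
            show (2:ℤ)+r+1 = r+3 from by ring, show (1:ℤ)+r+1 = r+2 from by ring,
            show (0:ℤ)+r+1 = r+1 from by ring]
  rw [hins, Finset.sum_insert (by simp)] at hfull
  norm_num at hfull
  linear_combination hfull

lemma telescope (M r s : ℤ) (hs : s = r + 1) :
    ∀ K : ℕ, (K:ℤ) ≤ M →
      ∑ k ∈ Finset.Icc 1 K, (2:ℤ)^k * (intChoose (M - (k:ℤ)) r - intChoose (M - (k:ℤ)) s)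
        = 2 * intChoose M s - 2^(K+1) * intChoose (M - (K:ℤ)) s := by
  intro K
  induction K with
  | zero => intro _; simp
  | succ K ih =>
    intro hK
    push_cast at hK ⊢
    rw [Finset.sum_Icc_succ_top (by omega : 1 ≤ K+1)]
    push_cast
    rw [ih (by omega)]
    have hp := ic_pascal (show (0:ℤ) ≤ M - ((K:ℤ)+1) by omega) s
    rw [show M - ((K:ℤ)+1) + 1 = M - (K:ℤ) from by ring,
      show s - 1 = r from by omega] at hp
    linear_combination (-(2:ℤ)^(K+1)) * hp

theorem sum_kb_choose_identity (n : ℕ) (hn : 2 ≤ n) :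
    (n:ℤ)*((n:ℤ) + 1) * ∑ k ∈ Finset.Icc 1 (n-2), (2:ℤ)^k *
        ∑ b ∈ Finset.Icc 1 (n-2), ((b : ℤ)^2 - 3) *
          (intChoose (2*(n:ℤ) - b - k - 4) ((n:ℤ) - k - 2) -
            intChoose (2*(n:ℤ) - b - k - 4) ((n:ℤ) - 2)) =
      4*(3*(n:ℤ)^3 + 7*(n:ℤ)^2 - 7*(n:ℤ) + 1) * intChoose (2*(n:ℤ) - 3) ((n:ℤ) - 2)
        - (n:ℤ)*((n:ℤ) + 1)*((n:ℤ)^2 - 1) * 2^(n-1)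
        - 2*(n:ℤ)*((n:ℤ) + 1)*(3*(n:ℤ) - 1) * intChoose (2*(n:ℤ) - 2) ((n:ℤ) - 1) := by
  have hA : ∀ k ∈ Finset.Icc 1 (n-2),
      (2:ℤ)^k * ∑ b ∈ Finset.Icc 1 (n-2), ((b : ℤ)^2 - 3) *
          (intChoose (2*(n:ℤ) - b - k - 4) ((n:ℤ) - k - 2) -
            intChoose (2*(n:ℤ) - b - k - 4) ((n:ℤ) - 2))
      = (2:ℤ)^k *
          (2*(intChoose (2*(n:ℤ)-3-(k:ℤ)) ((n:ℤ)-4) - intChoose (2*(n:ℤ)-3-(k:ℤ)) ((n:ℤ)-3))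
          + 3*(intChoose (2*(n:ℤ)-3-(k:ℤ)) ((n:ℤ)-3) - intChoose (2*(n:ℤ)-3-(k:ℤ)) ((n:ℤ)-2))
          + 3*(intChoose (2*(n:ℤ)-3-(k:ℤ)) ((n:ℤ)-1) - intChoose (2*(n:ℤ)-3-(k:ℤ)) (n:ℤ))
          + 2*(intChoose (2*(n:ℤ)-3-(k:ℤ)) (n:ℤ) - intChoose (2*(n:ℤ)-3-(k:ℤ)) ((n:ℤ)+1))) := by
    intro k hk
    simp only [Finset.mem_Icc] at hk
    obtain ⟨hk1, hk2⟩ := hk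
    congr 1
    have hsplit : ∑ b ∈ Finset.Icc 1 (n-2), ((b : ℤ)^2 - 3) *
          (intChoose (2*(n:ℤ) - b - k - 4) ((n:ℤ) - k - 2) -
            intChoose (2*(n:ℤ) - b - k - 4) ((n:ℤ) - 2))
        = (∑ b ∈ Finset.Icc 1 (n-2), ((b : ℤ)^2 - 3) *
              intChoose ((2*(n:ℤ) - (k:ℤ) - 4) - (b:ℤ)) ((n:ℤ) - (k:ℤ) - 2))
          - ∑ b ∈ Finset.Icc 1 (n-2), ((b : ℤ)^2 - 3) *
              intChoose ((2*(n:ℤ) - (k:ℤ) - 4) - (b:ℤ)) ((n:ℤ) - 2) := by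
      rw [← Finset.sum_sub_distrib]
      refine Finset.sum_congr rfl (fun b _ => ?_)
      rw [show 2*(n:ℤ) - (b:ℤ) - (k:ℤ) - 4 = (2*(n:ℤ) - (k:ℤ) - 4) - (b:ℤ) from by ring]
      ring
    rw [hsplit,
      ic_inner_sum (n-2) (2*(n:ℤ) - (k:ℤ) - 4) ((n:ℤ) - (k:ℤ) - 2) (by omega) (by omega),
      ic_inner_sum (n-2) (2*(n:ℤ) - (k:ℤ) - 4) ((n:ℤ) - 2) (by omega) (by omega)]
    have e1 : intChoose (2*(n:ℤ)-(k:ℤ)-4+1) ((n:ℤ)-(k:ℤ)-2+3)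
        = intChoose (2*(n:ℤ)-3-(k:ℤ)) ((n:ℤ)-4) := by
      rw [show 2*(n:ℤ)-(k:ℤ)-4+1 = 2*(n:ℤ)-3-(k:ℤ) from by ring,
        show (n:ℤ)-(k:ℤ)-2+3 = (n:ℤ)-(k:ℤ)+1 from by ring,
        ic_symm (show (0:ℤ) ≤ 2*(n:ℤ)-3-(k:ℤ) by omega) ((n:ℤ)-(k:ℤ)+1),
        show 2*(n:ℤ)-3-(k:ℤ) - ((n:ℤ)-(k:ℤ)+1) = (n:ℤ)-4 from by ring]
    have e2 : intChoose (2*(n:ℤ)-(k:ℤ)-4+1) ((n:ℤ)-(k:ℤ)-2+2)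
        = intChoose (2*(n:ℤ)-3-(k:ℤ)) ((n:ℤ)-3) := by
      rw [show 2*(n:ℤ)-(k:ℤ)-4+1 = 2*(n:ℤ)-3-(k:ℤ) from by ring,
        show (n:ℤ)-(k:ℤ)-2+2 = (n:ℤ)-(k:ℤ) from by ring,
        ic_symm (show (0:ℤ) ≤ 2*(n:ℤ)-3-(k:ℤ) by omega) ((n:ℤ)-(k:ℤ)),
        show 2*(n:ℤ)-3-(k:ℤ) - ((n:ℤ)-(k:ℤ)) = (n:ℤ)-3 from by ring]
    have e3 : intChoose (2*(n:ℤ)-(k:ℤ)-4+1) ((n:ℤ)-(k:ℤ)-2+1)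
        = intChoose (2*(n:ℤ)-3-(k:ℤ)) ((n:ℤ)-2) := by
      rw [show 2*(n:ℤ)-(k:ℤ)-4+1 = 2*(n:ℤ)-3-(k:ℤ) from by ring,
        show (n:ℤ)-(k:ℤ)-2+1 = (n:ℤ)-(k:ℤ)-1 from by ring,
        ic_symm (show (0:ℤ) ≤ 2*(n:ℤ)-3-(k:ℤ) by omega) ((n:ℤ)-(k:ℤ)-1),
        show 2*(n:ℤ)-3-(k:ℤ) - ((n:ℤ)-(k:ℤ)-1) = (n:ℤ)-2 from by ring]
    have e4 : intChoose (2*(n:ℤ)-(k:ℤ)-4) ((n:ℤ)-(k:ℤ)-2)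
        = intChoose (2*(n:ℤ)-(k:ℤ)-4) ((n:ℤ)-2) := by
      rw [ic_symm (show (0:ℤ) ≤ 2*(n:ℤ)-(k:ℤ)-4 by omega) ((n:ℤ)-(k:ℤ)-2),
        show 2*(n:ℤ)-(k:ℤ)-4 - ((n:ℤ)-(k:ℤ)-2) = (n:ℤ)-2 from by ring]
    have e5 : intChoose (2*(n:ℤ)-(k:ℤ)-4+1) ((n:ℤ)-2+3)
        = intChoose (2*(n:ℤ)-3-(k:ℤ)) ((n:ℤ)+1) := by
      rw [show 2*(n:ℤ)-(k:ℤ)-4+1 = 2*(n:ℤ)-3-(k:ℤ) from by ring,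
        show (n:ℤ)-2+3 = (n:ℤ)+1 from by ring]
    have e6 : intChoose (2*(n:ℤ)-(k:ℤ)-4+1) ((n:ℤ)-2+2)
        = intChoose (2*(n:ℤ)-3-(k:ℤ)) (n:ℤ) := by
      rw [show 2*(n:ℤ)-(k:ℤ)-4+1 = 2*(n:ℤ)-3-(k:ℤ) from by ring,
        show (n:ℤ)-2+2 = (n:ℤ) from by ring]
    have e7 : intChoose (2*(n:ℤ)-(k:ℤ)-4+1) ((n:ℤ)-2+1)
        = intChoose (2*(n:ℤ)-3-(k:ℤ)) ((n:ℤ)-1) := by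
      rw [show 2*(n:ℤ)-(k:ℤ)-4+1 = 2*(n:ℤ)-3-(k:ℤ) from by ring,
        show (n:ℤ)-2+1 = (n:ℤ)-1 from by ring]
    rw [e1, e2, e3, e4, e5, e6, e7]
    ring
  rw [Finset.sum_congr rfl hA]
  have hs2 : ∑ k ∈ Finset.Icc 1 (n-2), (2:ℤ)^k *
          (2*(intChoose (2*(n:ℤ)-3-(k:ℤ)) ((n:ℤ)-4) - intChoose (2*(n:ℤ)-3-(k:ℤ)) ((n:ℤ)-3))
          + 3*(intChoose (2*(n:ℤ)-3-(k:ℤ)) ((n:ℤ)-3) - intChoose (2*(n:ℤ)-3-(k:ℤ)) ((n:ℤ)-2))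
          + 3*(intChoose (2*(n:ℤ)-3-(k:ℤ)) ((n:ℤ)-1) - intChoose (2*(n:ℤ)-3-(k:ℤ)) (n:ℤ))
          + 2*(intChoose (2*(n:ℤ)-3-(k:ℤ)) (n:ℤ) - intChoose (2*(n:ℤ)-3-(k:ℤ)) ((n:ℤ)+1)))
      = 2*(∑ k ∈ Finset.Icc 1 (n-2), (2:ℤ)^k *
            (intChoose (2*(n:ℤ)-3-(k:ℤ)) ((n:ℤ)-4) - intChoose (2*(n:ℤ)-3-(k:ℤ)) ((n:ℤ)-3)))
        + 3*(∑ k ∈ Finset.Icc 1 (n-2), (2:ℤ)^k *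
            (intChoose (2*(n:ℤ)-3-(k:ℤ)) ((n:ℤ)-3) - intChoose (2*(n:ℤ)-3-(k:ℤ)) ((n:ℤ)-2)))
        + 3*(∑ k ∈ Finset.Icc 1 (n-2), (2:ℤ)^k *
            (intChoose (2*(n:ℤ)-3-(k:ℤ)) ((n:ℤ)-1) - intChoose (2*(n:ℤ)-3-(k:ℤ)) (n:ℤ)))
        + 2*(∑ k ∈ Finset.Icc 1 (n-2), (2:ℤ)^k *
            (intChoose (2*(n:ℤ)-3-(k:ℤ)) (n:ℤ) - intChoose (2*(n:ℤ)-3-(k:ℤ)) ((n:ℤ)+1))) := by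
    rw [Finset.mul_sum, Finset.mul_sum, Finset.mul_sum, Finset.mul_sum,
      ← Finset.sum_add_distrib, ← Finset.sum_add_distrib, ← Finset.sum_add_distrib]
    refine Finset.sum_congr rfl (fun k _ => by ring)
  rw [hs2,
    telescope (2*(n:ℤ)-3) ((n:ℤ)-4) ((n:ℤ)-3) (by ring) (n-2) (by omega),
    telescope (2*(n:ℤ)-3) ((n:ℤ)-3) ((n:ℤ)-2) (by ring) (n-2) (by omega),
    telescope (2*(n:ℤ)-3) ((n:ℤ)-1) (n:ℤ) (by ring) (n-2) (by omega),
    telescope (2*(n:ℤ)-3) (n:ℤ) ((n:ℤ)+1) (by ring) (n-2) (by omega)]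
  rw [show n-2+1 = n-1 from by omega,
    show ((n-2:ℕ):ℤ) = (n:ℤ)-2 from by omega,
    show 2*(n:ℤ)-3-((n:ℤ)-2) = (n:ℤ)-1 from by ring]
  have hv1 : intChoose ((n:ℤ)-1) ((n:ℤ)-2) = (n:ℤ)-1 := by
    have h := ic_ratio ((n:ℤ)-1) ((n:ℤ)-2)
    rw [show (n:ℤ)-2+1 = (n:ℤ)-1 from by ring,
      ic_self (show (0:ℤ) ≤ (n:ℤ)-1 by omega)] at h
    linear_combination -h
  have hv2 : 2 * intChoose ((n:ℤ)-1) ((n:ℤ)-3) = ((n:ℤ)-1)*((n:ℤ)-2) := by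
    have h := ic_ratio ((n:ℤ)-1) ((n:ℤ)-3)
    rw [show (n:ℤ)-3+1 = (n:ℤ)-2 from by ring] at h
    linear_combination -h + ((n:ℤ)-2) * hv1
  have hv3 : intChoose ((n:ℤ)-1) (n:ℤ) = 0 := ic_zero (by omega)
  have hv4 : intChoose ((n:ℤ)-1) ((n:ℤ)+1) = 0 := ic_zero (by omega)
  have hv5 : intChoose (2*(n:ℤ)-2) ((n:ℤ)-1) = 2 * intChoose (2*(n:ℤ)-3) ((n:ℤ)-2) := by
    have hp := ic_pascal (show (0:ℤ) ≤ 2*(n:ℤ)-3 by omega) ((n:ℤ)-1)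
    rw [show 2*(n:ℤ)-3+1 = 2*(n:ℤ)-2 from by ring,
      show (n:ℤ)-1-1 = (n:ℤ)-2 from by ring] at hp
    have hsym := ic_symm (show (0:ℤ) ≤ 2*(n:ℤ)-3 by omega) ((n:ℤ)-1)
    rw [show 2*(n:ℤ)-3-((n:ℤ)-1) = (n:ℤ)-2 from by ring] at hsym
    linear_combination hp + hsym
  have hv6 : intChoose (2*(n:ℤ)-3) ((n:ℤ)-2) * ((n:ℤ)-2)
      = intChoose (2*(n:ℤ)-3) ((n:ℤ)-3) * (n:ℤ) := by
    have h := ic_ratio (2*(n:ℤ)-3) ((n:ℤ)-3)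
    rw [show (n:ℤ)-3+1 = (n:ℤ)-2 from by ring] at h
    linear_combination h
  have hv7 : intChoose (2*(n:ℤ)-3) ((n:ℤ)-3) * ((n:ℤ)-3)
      = intChoose (2*(n:ℤ)-3) ((n:ℤ)-4) * ((n:ℤ)+1) := by
    have h := ic_ratio (2*(n:ℤ)-3) ((n:ℤ)-4)
    rw [show (n:ℤ)-4+1 = (n:ℤ)-3 from by ring] at h
    linear_combination h
  have hv8 : intChoose (2*(n:ℤ)-3) (n:ℤ) = intChoose (2*(n:ℤ)-3) ((n:ℤ)-3) := by
    have hsym := ic_symm (show (0:ℤ) ≤ 2*(n:ℤ)-3 by omega) (n:ℤ)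
    rw [show 2*(n:ℤ)-3-(n:ℤ) = (n:ℤ)-3 from by ring] at hsym
    exact hsym
  have hv9 : intChoose (2*(n:ℤ)-3) ((n:ℤ)+1) = intChoose (2*(n:ℤ)-3) ((n:ℤ)-4) := by
    have hsym := ic_symm (show (0:ℤ) ≤ 2*(n:ℤ)-3 by omega) ((n:ℤ)+1)
    rw [show 2*(n:ℤ)-3-((n:ℤ)+1) = (n:ℤ)-4 from by ring] at hsym
    exact hsym
  linear_combination (-((n:ℤ)*((n:ℤ)+1)*(2:ℤ)^(n-1))) * hv2
    + (-(3*(n:ℤ)*((n:ℤ)+1)*(2:ℤ)^(n-1))) * hv1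
    + (-(3*(n:ℤ)*((n:ℤ)+1)*(2:ℤ)^(n-1))) * hv3
    + (-(2*(n:ℤ)*((n:ℤ)+1)*(2:ℤ)^(n-1))) * hv4
    + (2*(n:ℤ)*((n:ℤ)+1)*(3*(n:ℤ)-1)) * hv5
    + (-(14*(n:ℤ)-2)) * hv6
    + (-(4*(n:ℤ))) * hv7
    + (6*(n:ℤ)*((n:ℤ)+1)) * hv8
    + (4*(n:ℤ)*((n:ℤ)+1)) * hv9
end
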